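/- arXiv:1010.3591 — 6 statements merged into one kernel-verified Lean document; each statement's English description precedes it below -/
import Mathlib

section
/- Let x, y, a, b, c be nonnegative real numbers and let z be a real number such that x + y + z = 0 and exp(c) ≥ exp(a) + exp(b). Then −x·log x − y·log y − z·log|z| + a·x + b·y + c·z ≤ 0, where by convention 0·log 0 = 0. -/
open Real

/-- `t - 1 ≤ t * log t` for nonnegative `t`. -/
lemma aux_mul_log (t : ℝ) (ht : 0 ≤ t) : t - 1 ≤ t * Real.log t := by
  rcases ht.eq_or_lt with h | h
  · simp [← h]
  · have h1 : Real.log t⁻¹ ≤ t⁻¹ - 1 := Real.log_le_sub_one_of_pos (by positivity)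
    rw [Real.log_inv] at h1
    have h2 : 0 < t⁻¹ := by positivity
    nlinarith [mul_le_mul_of_nonneg_left h1 h.le, mul_inv_cancel₀ h.ne']

/-- Lemma 2.7: the key convexity inequality. -/
theorem flat_tetra_convexity_ineq (x y a b c z : ℝ)
    (hx : 0 ≤ x) (hy : 0 ≤ y) (ha : 0 ≤ a) (hb : 0 ≤ b) (hc : 0 ≤ c)
    (hsum : x + y + z = 0) (hexp : Real.exp a + Real.exp b ≤ Real.exp c) :
    -x * Real.log x - y * Real.log y - z * Real.log |z| + a * x + b * y + c * z ≤ 0 := by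
  rcases (by linarith : (0:ℝ) ≤ x + y).eq_or_lt with hs | hs
  · have hx0 : x = 0 := by linarith
    have hy0 : y = 0 := by linarith
    have hz0 : z = 0 := by linarith
    simp [hx0, hy0, hz0]
  · have hz : z = -(x + y) := by linarith
    have habs : |z| = x + y := by rw [hz, abs_neg, abs_of_pos hs]
    have key : ∀ t r : ℝ, 0 ≤ t →
        t * (r + 1) - (x + y) * Real.exp r ≤ t * Real.log t - t * Real.log (x + y) := by
      intro t r ht
      rcases ht.eq_or_lt with h0 | h0
      · have hpos : 0 < (x + y) * Real.exp r := by positivity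
        simp [← h0]
        nlinarith
      · set den := (x + y) * Real.exp r with hden_def
        have hden : 0 < den := by positivity
        set u := t / den with hu_def
        have hu : 0 < u := div_pos h0 hden
        have hmain : u - 1 ≤ u * Real.log u := aux_mul_log u hu.le
        have hdu : den * u = t := by
          rw [hu_def]; field_simp
        have hlogu : Real.log u = Real.log t - Real.log (x + y) - r := by
          rw [hu_def, Real.log_div h0.ne' hden.ne', hden_def,
            Real.log_mul hs.ne' (Real.exp_ne_zero r), Real.log_exp]
          ring
        have hineq := mul_le_mul_of_nonneg_left hmain hden.le
        have e1 : den * (u - 1) = t - den := by rw [mul_sub, hdu, mul_one]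
        have e2 : den * (u * Real.log u) = t * Real.log t - t * Real.log (x + y) - t * r := by
          rw [← mul_assoc, hdu, hlogu]; ring
        rw [e1, e2] at hineq
        rw [hden_def] at hineq ⊢
        nlinarith
    have h1 := key x (a - c) hx
    have h2 := key y (b - c) hy
    have hdiv : Real.exp (a - c) + Real.exp (b - c) ≤ 1 := by
      rw [Real.exp_sub, Real.exp_sub, ← add_div, div_le_one (Real.exp_pos c)]
      exact hexp
    have hmul := mul_le_mul_of_nonneg_left hdiv hs.le
    rw [habs, hz]
    nlinarith
end

section
/- Let x, y, a, b, c be nonnegative real numbers with exp(c) ≥ exp(a) + exp(b). Then (x+y)·log(x+y) − x·log x − y·log y ≤ (c−a)·x + (c−b)·y, where by convention 0·log 0 = 0. -/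
open Real

/-- Equivalent reformulation of Lemma 2.7 with z = -x-y substituted. -/
theorem convexity_ineq_two_var (x y a b c : ℝ)
    (hx : 0 ≤ x) (hy : 0 ≤ y) (ha : 0 ≤ a) (hb : 0 ≤ b) (hc : 0 ≤ c)
    (hexp : Real.exp a + Real.exp b ≤ Real.exp c) :
    (x + y) * Real.log (x + y) - x * Real.log x - y * Real.log y
      ≤ (c - a) * x + (c - b) * y := by
  have hca : a ≤ c := by
    have h1 : Real.exp a ≤ Real.exp c := by nlinarith [Real.exp_pos b]
    exact (Real.exp_le_exp).mp h1
  have hcb : b ≤ c := by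
    have h1 : Real.exp b ≤ Real.exp c := by nlinarith [Real.exp_pos a]
    exact (Real.exp_le_exp).mp h1
  rcases eq_or_lt_of_le hx with hx0 | hx0
  · simp [← hx0]
    nlinarith
  rcases eq_or_lt_of_le hy with hy0 | hy0
  · simp [← hy0]
    nlinarith
  have hxy : 0 < x + y := by linarith
  have key : ∀ u v : ℝ, 0 < u → 0 < v → u * Real.log v - u * Real.log u ≤ v - u := by
    intro u v hu hv
    have h := Real.log_le_sub_one_of_pos (div_pos hv hu)
    rw [Real.log_div hv.ne' hu.ne'] at h
    have huv : u * (v / u) = v := mul_div_cancel₀ v hu.ne'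
    nlinarith [mul_le_mul_of_nonneg_left h hu.le]
  have h1 := key x ((x+y) * Real.exp (a - c)) hx0 (by positivity)
  have h2 := key y ((x+y) * Real.exp (b - c)) hy0 (by positivity)
  rw [Real.log_mul (by positivity) (Real.exp_ne_zero _), Real.log_exp] at h1 h2
  have hsum : (x+y) * Real.exp (a-c) + (x+y) * Real.exp (b-c) ≤ x + y := by
    have h : Real.exp (a-c) + Real.exp (b-c) ≤ 1 := by
      rw [Real.exp_sub, Real.exp_sub, ← add_div, div_le_one (Real.exp_pos c)]
      exact hexp
    nlinarith
  nlinarith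
end

section
/- Let x ≥ 0 and let a, b, c be real numbers with exp(c) ≥ exp(a) + exp(b). Then (x+1)·log(x+1) − x·log x ≤ (c−a)·x + (c−b), where by convention 0·log 0 = 0. -/
open Real

/-- Inequality (2.18): the normalized (y = 1) case of Lemma 2.7. -/
theorem convexity_ineq_normalized (x a b c : ℝ) (hx : 0 ≤ x)
    (hexp : Real.exp a + Real.exp b ≤ Real.exp c) :
    (x + 1) * Real.log (x + 1) - x * Real.log x ≤ (c - a) * x + (c - b) := by
  have hA : (0:ℝ) < Real.exp (a - c) := Real.exp_pos _
  have hB : (0:ℝ) < Real.exp (b - c) := Real.exp_pos _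
  have hAB : Real.exp (a - c) + Real.exp (b - c) ≤ 1 := by
    have hc : (0:ℝ) < Real.exp c := Real.exp_pos _
    rw [Real.exp_sub, Real.exp_sub, ← add_div, div_le_one hc]
    exact hexp
  rcases eq_or_lt_of_le hx with h0 | hx0
  · -- x = 0 case
    subst h0
    simp only [zero_add, Real.log_one, mul_zero, zero_mul, mul_one, sub_zero]
    have hb : b ≤ c := by
      have h : Real.exp b < Real.exp c :=
        lt_of_lt_of_le (by linarith [Real.exp_pos a]) hexp
      exact le_of_lt (Real.exp_lt_exp.mp h)
    linarith
  · set A := Real.exp (a - c) with hAdef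
    set B := Real.exp (b - c) with hBdef
    have hx1 : (0:ℝ) < x + 1 := by linarith
    have h1 : Real.log ((x + 1) * A / x) ≤ (x + 1) * A / x - 1 :=
      Real.log_le_sub_one_of_pos (by positivity)
    have h2 : Real.log ((x + 1) * B) ≤ (x + 1) * B - 1 :=
      Real.log_le_sub_one_of_pos (by positivity)
    have e1 : Real.log ((x + 1) * A / x) = Real.log (x + 1) + (a - c) - Real.log x := by
      rw [Real.log_div (by positivity) (ne_of_gt hx0), Real.log_mul (ne_of_gt hx1) (ne_of_gt hA),
        hAdef, Real.log_exp]
    have e2 : Real.log ((x + 1) * B) = Real.log (x + 1) + (b - c) := by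
      rw [Real.log_mul (ne_of_gt hx1) (ne_of_gt hB), hBdef, Real.log_exp]
    rw [e1] at h1
    rw [e2] at h2
    -- multiply h1 by x
    have h1' : x * (Real.log (x + 1) + (a - c) - Real.log x) ≤ (x + 1) * A - x := by
      have := mul_le_mul_of_nonneg_left h1 hx
      calc x * (Real.log (x + 1) + (a - c) - Real.log x)
          ≤ x * ((x + 1) * A / x - 1) := this
        _ = (x + 1) * A - x := by field_simp
    nlinarith [mul_le_mul_of_nonneg_left hAB (le_of_lt hx1)]
end

section
/- Let a₁, a₂ be nonnegative real numbers and a₃ a real number with a₁ + a₂ + a₃ = 0, and let w₁, w₂, w₃ be real numbers with exp(w₃) = exp(w₁) + exp(w₂). Then −a₁·log|a₁| − a₂·log|a₂| − a₃·log|a₃| + a₁·w₁ + a₂·w₂ + a₃·w₃ ≤ 0, where by convention 0·log 0 = 0. -/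
open Real

/-- Key pointwise estimate: Gibbs-type inequality from `log t ≤ t - 1`. -/
lemma flat_tetra_key (a s w w₃ : ℝ) (ha : 0 < a) (hs : 0 < s) :
    a * (w - w₃ + Real.log s - Real.log a) ≤ Real.exp (w - w₃) * s - a := by
  have ht : 0 < Real.exp (w - w₃) * s / a := by positivity
  have hlog : Real.log (Real.exp (w - w₃) * s / a)
      = (w - w₃) + Real.log s - Real.log a := by
    rw [Real.log_div (by positivity) ha.ne', Real.log_mul (Real.exp_ne_zero _) hs.ne',
      Real.log_exp]
  have h := Real.log_le_sub_one_of_pos ht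
  rw [hlog] at h
  have h2 : a * ((w - w₃) + Real.log s - Real.log a)
      ≤ a * (Real.exp (w - w₃) * s / a - 1) :=
    mul_le_mul_of_nonneg_left h ha.le
  have h3 : a * (Real.exp (w - w₃) * s / a - 1) = Real.exp (w - w₃) * s - a := by
    field_simp
  linarith

/-- Inequality (2.16): the contribution of a flat tetrahedron to the derivative
of the volume is nonpositive. -/
theorem flat_tetra_contribution_nonpos (a₁ a₂ a₃ w₁ w₂ w₃ : ℝ)
    (ha₁ : 0 ≤ a₁) (ha₂ : 0 ≤ a₂) (hsum : a₁ + a₂ + a₃ = 0)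
    (hw : Real.exp w₃ = Real.exp w₁ + Real.exp w₂) :
    -a₁ * Real.log |a₁| - a₂ * Real.log |a₂| - a₃ * Real.log |a₃|
      + a₁ * w₁ + a₂ * w₂ + a₃ * w₃ ≤ 0 := by
  have ha3 : a₃ = -(a₁ + a₂) := by linarith
  subst ha3
  simp only [Real.log_abs]
  rw [Real.log_neg_eq_log]
  rcases eq_or_lt_of_le ha₁ with h1 | h1
  · rcases eq_or_lt_of_le ha₂ with h2 | h2
    · simp [← h1, ← h2]
    · -- a₁ = 0
      have hw23 : w₂ ≤ w₃ := by
        have := Real.exp_pos w₁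
        exact Real.exp_le_exp.mp (by linarith)
      rw [← h1]
      have : (0:ℝ) + a₂ = a₂ := by ring
      rw [this]
      nlinarith
  · rcases eq_or_lt_of_le ha₂ with h2 | h2
    · -- a₂ = 0
      have hw13 : w₁ ≤ w₃ := by
        have := Real.exp_pos w₂
        exact Real.exp_le_exp.mp (by linarith)
      rw [← h2]
      have : a₁ + (0:ℝ) = a₁ := by ring
      rw [this]
      nlinarith
    · have hs : 0 < a₁ + a₂ := by linarith
      have k1 := flat_tetra_key a₁ (a₁ + a₂) w₁ w₃ h1 hs
      have k2 := flat_tetra_key a₂ (a₁ + a₂) w₂ w₃ h2 hs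
      have he : Real.exp (w₁ - w₃) * (a₁ + a₂) + Real.exp (w₂ - w₃) * (a₁ + a₂)
          = a₁ + a₂ := by
        rw [Real.exp_sub, Real.exp_sub]
        field_simp
        linear_combination -hw
      linarith
end

section
/- The Lobachevsky function Λ(t) = −∫₀ᵗ log|2 sin u| du is continuous on the interval [0, π]. -/
open Real MeasureTheory intervalIntegral Set

-- log is interval integrable on [0,1]
lemma aux_log01 : IntervalIntegrable Real.log volume 0 1 := by
  have h : IntervalIntegrable (fun x : ℝ => -Real.log x) volume 0 1 := by
    apply intervalIntegrable_deriv_of_nonneg (g := fun x => x - x * Real.log x)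
    · have : Continuous fun x : ℝ => x - x * Real.log x :=
        continuous_id.sub Real.continuous_mul_log
      exact this.continuousOn
    · intro x hx
      have hx' : x ∈ Set.Ioo (0:ℝ) 1 := by simpa using hx
      have hx0 : x ≠ 0 := ne_of_gt hx'.1
      have h1 : HasDerivAt (fun x : ℝ => x * Real.log x) (Real.log x + 1) x := by
        have := (hasDerivAt_id' x).mul (Real.hasDerivAt_log hx0)
        rwa [one_mul, mul_inv_cancel₀ hx0] at this
      rw [show -Real.log x = 1 - (Real.log x + 1) by ring]
      exact (hasDerivAt_id' x).fun_sub h1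
    · intro x hx
      have hx' : x ∈ Set.Ioo (0:ℝ) 1 := by simpa using hx
      have : Real.log x ≤ 0 := Real.log_nonpos (le_of_lt hx'.1) (le_of_lt hx'.2)
      linarith
  have e : (-fun x : ℝ => -Real.log x) = Real.log := by funext x; simp
  have := h.neg
  rwa [e] at this

lemma aux_log_pi2 : IntervalIntegrable Real.log volume 0 (Real.pi / 2) := by
  refine aux_log01.trans ?_
  apply ContinuousOn.intervalIntegrable
  apply Real.continuousOn_log.mono
  intro x hx
  rw [Set.uIcc_of_le (by nlinarith [Real.pi_gt_three] : (1:ℝ) ≤ Real.pi / 2)] at hx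
  simp only [Set.mem_compl_iff, Set.mem_singleton_iff]
  linarith [hx.1]

-- integrability of log |2 sin u| on [0, π/2]
lemma aux_half : IntervalIntegrable (fun u => Real.log |2 * Real.sin u|) volume 0 (Real.pi / 2) := by
  have hpi : (0:ℝ) < Real.pi / 2 := by positivity
  rw [intervalIntegrable_iff_integrableOn_Ioc_of_le hpi.le]
  have hg : IntegrableOn (fun u : ℝ => |Real.log u| + Real.log 2) (Set.Ioc 0 (Real.pi/2)) volume := by
    apply Integrable.add
    · have := aux_log_pi2.abs
      rw [intervalIntegrable_iff_integrableOn_Ioc_of_le hpi.le] at this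
      exact this
    · exact integrableOn_const (by simp [measure_Ioc_lt_top])
  apply Integrable.mono hg
  · apply Measurable.aestronglyMeasurable
    exact (measurable_const.mul Real.measurable_sin).abs.log
  · rw [ae_restrict_iff' measurableSet_Ioc]
    filter_upwards with u hu
    obtain ⟨hu0, hu2⟩ := hu
    have hsin_pos : 0 < Real.sin u := Real.sin_pos_of_pos_of_lt_pi hu0 (by linarith [Real.pi_pos])
    have hsin_le : Real.sin u ≤ u := Real.sin_le hu0.le
    have hsin_ge : 2 / Real.pi * u ≤ Real.sin u := Real.mul_le_sin hu0.le hu2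
    have habs : |2 * Real.sin u| = 2 * Real.sin u := abs_of_pos (by linarith)
    rw [Real.norm_eq_abs, Real.norm_eq_abs, habs]
    have hlo : Real.log (4 / Real.pi * u) ≤ Real.log (2 * Real.sin u) := by
      apply Real.log_le_log (by positivity)
      calc 4 / Real.pi * u = 2 * (2 / Real.pi * u) := by ring
        _ ≤ 2 * Real.sin u := by linarith
    have hhi : Real.log (2 * Real.sin u) ≤ Real.log (2 * u) := by
      apply Real.log_le_log (by positivity)
      linarith
    have hmax : |Real.log (2 * Real.sin u)| ≤ max |Real.log (4 / Real.pi * u)| |Real.log (2 * u)| :=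
      abs_le_max_abs_abs hlo hhi
    have h1 : |Real.log (4 / Real.pi * u)| ≤ |Real.log u| + Real.log 2 := by
      rw [Real.log_mul (by positivity) (ne_of_gt hu0)]
      have hc : |Real.log (4 / Real.pi)| ≤ Real.log 2 := by
        rw [abs_of_nonneg (Real.log_nonneg ((le_div_iff₀ Real.pi_pos).mpr (by nlinarith [Real.pi_lt_d2])))]
        apply Real.log_le_log (by positivity)
        rw [div_le_iff₀ Real.pi_pos]
        nlinarith [Real.pi_gt_three]
      calc |Real.log (4 / Real.pi) + Real.log u| ≤ |Real.log (4 / Real.pi)| + |Real.log u| :=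
            abs_add_le _ _
        _ ≤ |Real.log u| + Real.log 2 := by linarith
    have h2 : |Real.log (2 * u)| ≤ |Real.log u| + Real.log 2 := by
      rw [Real.log_mul two_ne_zero (ne_of_gt hu0)]
      calc |Real.log 2 + Real.log u| ≤ |Real.log 2| + |Real.log u| := abs_add_le _ _
        _ = |Real.log u| + Real.log 2 := by
            rw [abs_of_nonneg (Real.log_nonneg one_le_two)]; ring
    have : |Real.log (2 * Real.sin u)| ≤ |Real.log u| + Real.log 2 := by
      rcases max_cases |Real.log (4 / Real.pi * u)| |Real.log (2 * u)| with ⟨h, _⟩ | ⟨h, _⟩ <;>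
        rw [h] at hmax <;> linarith
    have hrhs : 0 ≤ |Real.log u| + Real.log 2 := by positivity
    rw [abs_of_nonneg hrhs]
    exact this

lemma aux_full : IntervalIntegrable (fun u => Real.log |2 * Real.sin u|) volume 0 Real.pi := by
  refine aux_half.trans ?_
  have h := aux_half.comp_sub_left Real.pi
  have e1 : Real.pi - 0 = Real.pi := by ring
  have e2 : Real.pi - Real.pi / 2 = Real.pi / 2 := by ring
  rw [e1, e2] at h
  have : (fun x => Real.log |2 * Real.sin (Real.pi - x)|) = fun u => Real.log |2 * Real.sin u| := by
    funext x; rw [Real.sin_pi_sub]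
  rw [this] at h
  exact h.symm

/-- The Lobachevsky function Λ(t) = −∫₀ᵗ log|2 sin u| du. -/
noncomputable def lobachevsky (t : ℝ) : ℝ :=
  -∫ u in (0 : ℝ)..t, Real.log |2 * Real.sin u|

/-- The Lobachevsky function is continuous on [0, π]. -/
theorem continuousOn_lobachevsky :
    ContinuousOn lobachevsky (Set.Icc 0 Real.pi) := by
  have h := intervalIntegral.continuousOn_primitive_interval' aux_full
    (Set.left_mem_uIcc (a := (0:ℝ)) (b := Real.pi))
  rw [Set.uIcc_of_le Real.pi_pos.le] at h
  exact h.neg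
end

section
/- The function (t₁, t₂) ↦ Λ(t₁) + Λ(t₂) + Λ(π − t₁ − t₂) is strictly concave on the open set { (t₁, t₂) ∈ ℝ² : t₁ > 0, t₂ > 0, t₁ + t₂ < π }, where Λ is the Lobachevsky function. -/
open Real MeasureTheory

lemma intInt_log {t : ℝ} (ht : 0 < t) : IntervalIntegrable Real.log volume 0 t := by
  rw [intervalIntegrable_iff_integrableOn_Ioc_of_le ht.le]
  have hg : IntegrableOn (fun u : ℝ => |Real.log t| + 2 * u ^ (-(1/2) : ℝ)) (Set.Ioc 0 t) volume := by
    apply Integrable.add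
    · exact integrableOn_const measure_Ioc_lt_top.ne
    · have := (intervalIntegral.intervalIntegrable_rpow' (a := 0) (b := t)
        (r := (-(1/2) : ℝ)) (by norm_num)).const_mul 2
      rwa [intervalIntegrable_iff_integrableOn_Ioc_of_le ht.le] at this
  apply Integrable.mono' hg Real.measurable_log.aestronglyMeasurable
  filter_upwards [ae_restrict_mem measurableSet_Ioc] with u hu
  obtain ⟨hu0, hut⟩ := hu
  have hrpow : (0:ℝ) ≤ u ^ (-(1/2) : ℝ) := Real.rpow_nonneg hu0.le _
  rcases le_or_gt u 1 with h1 | h1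
  · have hlogle : Real.log u ≤ 0 := Real.log_nonpos hu0.le h1
    rw [Real.norm_eq_abs, abs_of_nonpos hlogle]
    have key : -Real.log u ≤ 2 * u ^ (-(1/2) : ℝ) := by
      have h2 : Real.log (u ^ (-(1/2) : ℝ)) ≤ u ^ (-(1/2) : ℝ) - 1 :=
        Real.log_le_sub_one_of_pos (Real.rpow_pos_of_pos hu0 _)
      rw [Real.log_rpow hu0] at h2
      nlinarith
    have := abs_nonneg (Real.log t)
    linarith
  · have : Real.log u ≤ Real.log t := Real.log_le_log hu0 hut
    have h0 : 0 ≤ Real.log u := Real.log_nonneg h1.le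
    rw [Real.norm_eq_abs, abs_of_nonneg h0]
    have : Real.log t ≤ |Real.log t| := le_abs_self _
    nlinarith

lemma sin_lower {t u : ℝ} (ht : 0 < t) (ht' : t ≤ π) (hu : 0 < u) (hut : u ≤ t) :
    (Real.sin t / t) * u ≤ Real.sin u := by
  have hm0 : (0:ℝ) ∈ Set.Icc (0:ℝ) π := by constructor <;> simp [Real.pi_pos.le]
  have hmt : t ∈ Set.Icc (0:ℝ) π := ⟨ht.le, ht'⟩
  have ha : (0:ℝ) ≤ 1 - u/t := by rw [sub_nonneg]; exact div_le_one_of_le₀ hut ht.le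
  have hb : (0:ℝ) ≤ u/t := by positivity
  have hab : (1 - u/t) + u/t = 1 := by ring
  have h := strictConcaveOn_sin_Icc.concaveOn.2 hm0 hmt ha hb hab
  simp only [smul_eq_mul, mul_zero, Real.sin_zero, zero_add, zero_mul, add_zero] at h
  rw [div_mul_cancel₀ _ ht.ne'] at h
  calc (Real.sin t / t) * u = (u/t) * Real.sin t := by ring
  _ ≤ Real.sin u := h

lemma intInt_logsin {t : ℝ} (ht : 0 < t) (ht' : t < π) :
    IntervalIntegrable (fun u => Real.log |2 * Real.sin u|) volume 0 t := by
  have hst : 0 < Real.sin t := Real.sin_pos_of_pos_of_lt_pi ht ht'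
  have hc : 0 < Real.sin t / t := by positivity
  rw [intervalIntegrable_iff_integrableOn_Ioc_of_le ht.le]
  have hg : IntegrableOn
      (fun u : ℝ => (Real.log 2 + |Real.log (Real.sin t / t)|) + |Real.log u|)
      (Set.Ioc 0 t) volume := by
    apply Integrable.add
    · exact integrableOn_const measure_Ioc_lt_top.ne
    · have := (intInt_log ht).abs
      rwa [intervalIntegrable_iff_integrableOn_Ioc_of_le ht.le] at this
  apply Integrable.mono' hg
  · exact (Real.measurable_log.comp
      ((measurable_const.mul Real.measurable_sin).abs)).aestronglyMeasurable
  filter_upwards [ae_restrict_mem measurableSet_Ioc] with u hu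
  obtain ⟨hu0, hut⟩ := hu
  have hsu : 0 < Real.sin u := Real.sin_pos_of_pos_of_lt_pi hu0 (lt_of_le_of_lt hut ht')
  have habs : |2 * Real.sin u| = 2 * Real.sin u := abs_of_pos (by linarith)
  rw [Real.norm_eq_abs, habs, Real.log_mul (by norm_num) hsu.ne']
  -- bounds on log (sin u)
  have hub : Real.log (Real.sin u) ≤ Real.log u := Real.log_le_log hsu (Real.sin_le hu0.le)
  have hlb : Real.log (Real.sin t / t) + Real.log u ≤ Real.log (Real.sin u) := by
    have := sin_lower ht ht'.le hu0 hut
    calc Real.log (Real.sin t / t) + Real.log u = Real.log ((Real.sin t / t) * u) :=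
      (Real.log_mul hc.ne' hu0.ne').symm
    _ ≤ Real.log (Real.sin u) := Real.log_le_log (by positivity) this
  have h2 : (0:ℝ) ≤ Real.log 2 := Real.log_nonneg (by norm_num)
  have e1 : Real.log u ≤ |Real.log u| := le_abs_self _
  have e2 : -|Real.log u| ≤ Real.log u := neg_abs_le _
  have e3 : -|Real.log (Real.sin t / t)| ≤ Real.log (Real.sin t / t) := neg_abs_le _
  rw [abs_le]
  constructor <;> nlinarith [abs_nonneg (Real.log u), abs_nonneg (Real.log (Real.sin t / t))]

lemma hasDerivAt_lob {t : ℝ} (ht : 0 < t) (ht' : t < π) :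
    HasDerivAt lobachevsky (-Real.log (2 * Real.sin t)) t := by
  have hst : 0 < Real.sin t := Real.sin_pos_of_pos_of_lt_pi ht ht'
  have hcont : ContinuousAt (fun u => Real.log |2 * Real.sin u|) t := by
    apply Real.continuousAt_log ?_ |>.comp
    · exact ((continuous_const.mul Real.continuous_sin).abs).continuousAt
    · simp only [abs_ne_zero]
      positivity
  have hmeas : StronglyMeasurableAtFilter (fun u => Real.log |2 * Real.sin u|) (nhds t) volume :=
    ⟨Set.univ, Filter.univ_mem,
      (Real.measurable_log.comp
        ((measurable_const.mul Real.measurable_sin).abs)).aestronglyMeasurable⟩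
  have h := (intervalIntegral.integral_hasDerivAt_right (intInt_logsin ht ht') hmeas hcont).neg
  have : Real.log |2 * Real.sin t| = Real.log (2 * Real.sin t) := by
    rw [abs_of_pos (by linarith)]
  rw [this] at h
  unfold lobachevsky
  exact h

lemma hasDerivAt_nlog2sin {t : ℝ} (ht : 0 < t) (ht' : t < π) :
    HasDerivAt (fun s => -Real.log (2 * Real.sin s)) (-(Real.cos t / Real.sin t)) t := by
  have hst : 0 < Real.sin t := Real.sin_pos_of_pos_of_lt_pi ht ht'
  have h1 : HasDerivAt (fun s => 2 * Real.sin s) (2 * Real.cos t) t :=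
    (Real.hasDerivAt_sin t).const_mul 2
  have h2 : HasDerivAt (fun s => -Real.log (2 * Real.sin s)) _ t := (h1.log (by positivity)).neg
  convert h2 using 1
  field_simp

lemma cot_identity {x y z : ℝ} (hx : 0 < x) (hx' : x < π) (hy : 0 < y) (hy' : y < π)
    (hz : 0 < z) (hz' : z < π) (hxyz : x + y + z = π) :
    (Real.cos x / Real.sin x) * (Real.cos y / Real.sin y)
      + (Real.cos y / Real.sin y) * (Real.cos z / Real.sin z)
      + (Real.cos z / Real.sin z) * (Real.cos x / Real.sin x) = 1 := by
  have sx : 0 < Real.sin x := Real.sin_pos_of_pos_of_lt_pi hx hx'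
  have sy : 0 < Real.sin y := Real.sin_pos_of_pos_of_lt_pi hy hy'
  have sz : 0 < Real.sin z := Real.sin_pos_of_pos_of_lt_pi hz hz'
  have hzeq : z = π - (x + y) := by linarith
  have hsz : Real.sin z = Real.sin x * Real.cos y + Real.cos x * Real.sin y := by
    rw [hzeq, Real.sin_pi_sub, Real.sin_add]
  have hcz : Real.cos z = -(Real.cos x * Real.cos y - Real.sin x * Real.sin y) := by
    rw [hzeq, Real.cos_pi_sub, Real.cos_add]
  field_simp
  rw [hsz, hcz]
  nlinarith [Real.sin_sq_add_cos_sq x, Real.sin_sq_add_cos_sq y]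

lemma key_pos {x y z p q : ℝ} (hx : 0 < x) (hx' : x < π) (hy : 0 < y) (hy' : y < π)
    (hz : 0 < z) (hz' : z < π) (hxyz : x + y + z = π) (hpq : p ≠ 0 ∨ q ≠ 0) :
    0 < p^2 * (Real.cos x / Real.sin x) + q^2 * (Real.cos y / Real.sin y)
      + (p+q)^2 * (Real.cos z / Real.sin z) := by
  set a := Real.cos x / Real.sin x
  set b := Real.cos y / Real.sin y
  set c := Real.cos z / Real.sin z
  have sx : 0 < Real.sin x := Real.sin_pos_of_pos_of_lt_pi hx hx'
  have sy : 0 < Real.sin y := Real.sin_pos_of_pos_of_lt_pi hy hy'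
  have sz : 0 < Real.sin z := Real.sin_pos_of_pos_of_lt_pi hz hz'
  have hid : a * b + b * c + c * a = 1 := cot_identity hx hx' hy hy' hz hz' hxyz
  have hA : 0 < a + c := by
    have hsy : Real.sin (x + z) = Real.sin y := by
      have : x + z = π - y := by linarith
      rw [this, Real.sin_pi_sub]
    have : a + c = Real.sin y / (Real.sin x * Real.sin z) := by
      rw [← hsy, Real.sin_add]
      simp only [a, c]
      field_simp
      ring
    rw [this]
    positivity
  -- (a+c) * Q = ((a+c)p + cq)^2 + q^2
  have hkey : (a + c) * (p^2 * a + q^2 * b + (p+q)^2 * c)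
      = ((a+c)*p + c*q)^2 + q^2 := by nlinarith [hid]
  rcases hpq with hp | hq
  · rcases eq_or_ne q 0 with hq0 | hq0
    · have hne : (a+c)*p ≠ 0 := mul_ne_zero hA.ne' hp
      have h1 : 0 < ((a+c)*p)^2 := by positivity
      have : 0 < ((a+c)*p + c*q)^2 + q^2 := by
        rw [hq0]
        nlinarith
      nlinarith
    · have hq2 : 0 < q^2 := by positivity
      have : 0 < ((a+c)*p + c*q)^2 + q^2 := by
        linarith [sq_nonneg ((a+c)*p + c*q)]
      nlinarith
  · have hq2 : 0 < q^2 := by positivity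
    have : 0 < ((a+c)*p + c*q)^2 + q^2 := by
      linarith [sq_nonneg ((a+c)*p + c*q)]
    nlinarith

lemma comb_pos {a b x y : ℝ} (ha : 0 ≤ a) (hb : 0 ≤ b) (hab : a + b = 1)
    (hx : 0 < x) (hy : 0 < y) : 0 < a * x + b * y := by
  rcases le_total x y with h | h
  · nlinarith [mul_nonneg hb (sub_nonneg.2 h)]
  · nlinarith [mul_nonneg ha (sub_nonneg.2 h)]

/-- Rivin's theorem: the volume of an ideal tetrahedron is strictly concave
in its dihedral angles. -/
theorem strictConcaveOn_ideal_tetra_volume :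
    StrictConcaveOn ℝ
      {p : ℝ × ℝ | 0 < p.1 ∧ 0 < p.2 ∧ p.1 + p.2 < Real.pi}
      (fun p : ℝ × ℝ =>
        lobachevsky p.1 + lobachevsky p.2 + lobachevsky (Real.pi - p.1 - p.2)) := by
  constructor
  · -- convexity of the domain
    intro p hp q hq a b ha hb hab
    obtain ⟨hp1, hp2, hp3⟩ := hp
    obtain ⟨hq1, hq2, hq3⟩ := hq
    refine ⟨?_, ?_, ?_⟩ <;>
      simp only [Prod.fst_add, Prod.snd_add, Prod.smul_fst, Prod.smul_snd, smul_eq_mul]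
    · exact comb_pos ha hb hab hp1 hq1
    · exact comb_pos ha hb hab hp2 hq2
    · have := comb_pos ha hb hab (by linarith : 0 < π - (p.1 + p.2))
        (by linarith : 0 < π - (q.1 + q.2))
      nlinarith
  · intro x hx y hy hxy a b ha hb hab
    obtain ⟨hx1, hx2, hx3⟩ := hx
    obtain ⟨hy1, hy2, hy3⟩ := hy
    set u1 := y.1 - x.1 with hu1
    set u2 := y.2 - x.2 with hu2
    have hune : u1 ≠ 0 ∨ u2 ≠ 0 := by
      by_contra h
      push_neg at h
      exact hxy (Prod.ext (by linarith [h.1]) (by linarith [h.2]))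
    set X1 : ℝ → ℝ := fun t => x.1 + t * u1 with hX1
    set X2 : ℝ → ℝ := fun t => x.2 + t * u2 with hX2
    set X3 : ℝ → ℝ := fun t => π - (x.1 + t * u1) - (x.2 + t * u2) with hX3
    set g : ℝ → ℝ := fun t => lobachevsky (X1 t) + lobachevsky (X2 t) + lobachevsky (X3 t)
      with hg
    set U : Set ℝ := {t | 0 < X1 t ∧ 0 < X2 t ∧ X1 t + X2 t < π} with hU
    have eX3 : ∀ t : ℝ, X3 t = π - X1 t - X2 t := fun t => by simp only [hX1, hX2, hX3]
    have hX3pos : ∀ t ∈ U, 0 < X3 t ∧ X3 t < π := by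
      intro t ht
      obtain ⟨h1, h2, h3⟩ := ht
      rw [eX3 t]
      constructor <;> linarith
    have hc1 : Continuous X1 := by rw [hX1]; fun_prop
    have hc2 : Continuous X2 := by rw [hX2]; fun_prop
    have hUopen : IsOpen U := by
      have hUeq : U = X1 ⁻¹' Set.Ioi 0 ∩ X2 ⁻¹' Set.Ioi 0
          ∩ (fun t => X1 t + X2 t) ⁻¹' Set.Iio π := by
        ext t
        constructor
        · rintro ⟨h1, h2, h3⟩; exact ⟨⟨h1, h2⟩, h3⟩
        · rintro ⟨⟨h1, h2⟩, h3⟩; exact ⟨h1, h2, h3⟩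
      rw [hUeq]
      exact ((isOpen_Ioi.preimage hc1).inter (isOpen_Ioi.preimage hc2)).inter
        (isOpen_Iio.preimage (hc1.add hc2))
    have hmem : ∀ t ∈ Set.Icc (0:ℝ) 1, t ∈ U := by
      intro t ht
      obtain ⟨ht0, ht1⟩ := ht
      have e1 : X1 t = (1 - t) * x.1 + t * y.1 := by simp only [hX1, hu1]; ring
      have e2 : X2 t = (1 - t) * x.2 + t * y.2 := by simp only [hX2, hu2]; ring
      refine ⟨?_, ?_, ?_⟩
      · rw [e1]; exact comb_pos (by linarith) ht0 (by ring) hx1 hy1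
      · rw [e2]; exact comb_pos (by linarith) ht0 (by ring) hx2 hy2
      · rw [e1, e2]
        have := comb_pos (a := 1 - t) (b := t) (by linarith) ht0 (by ring)
          (by linarith : 0 < π - (x.1 + x.2)) (by linarith : 0 < π - (y.1 + y.2))
        nlinarith
    set G : ℝ → ℝ := fun t => -Real.log (2 * Real.sin (X1 t)) * u1
      + -Real.log (2 * Real.sin (X2 t)) * u2
      + -Real.log (2 * Real.sin (X3 t)) * (-u1 - u2) with hG
    have hd1 : ∀ t : ℝ, HasDerivAt X1 u1 t := by
      intro t
      simpa [hX1] using ((hasDerivAt_id t).mul_const u1).const_add x.1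
    have hd2 : ∀ t : ℝ, HasDerivAt X2 u2 t := by
      intro t
      simpa [hX2] using ((hasDerivAt_id t).mul_const u2).const_add x.2
    have hd3 : ∀ t : ℝ, HasDerivAt X3 (-u1 - u2) t := by
      intro t
      have : HasDerivAt (fun s => π - (X1 s + X2 s)) _ t := (((hd1 t).add (hd2 t)).const_sub π)
      have heq : X3 = fun s => π - (X1 s + X2 s) := by
        funext s; simp only [hX3, hX1, hX2]; ring
      rw [heq]
      convert this using 1
      ring
    have hgd : ∀ t ∈ U, HasDerivAt g (G t) t := by
      intro t ht
      obtain ⟨h1, h2, h3⟩ := ht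
      obtain ⟨h3a, h3b⟩ := hX3pos t ⟨h1, h2, h3⟩
      have L1 := (hasDerivAt_lob h1 (by linarith)).comp t (hd1 t)
      have L2 := (hasDerivAt_lob h2 (by linarith)).comp t (hd2 t)
      have L3 := (hasDerivAt_lob h3a h3b).comp t (hd3 t)
      exact (L1.add L2).add L3
    set G2 : ℝ → ℝ := fun t => -(Real.cos (X1 t) / Real.sin (X1 t)) * u1 * u1
      + -(Real.cos (X2 t) / Real.sin (X2 t)) * u2 * u2
      + -(Real.cos (X3 t) / Real.sin (X3 t)) * (-u1 - u2) * (-u1 - u2) with hG2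
    have hGd : ∀ t ∈ U, HasDerivAt G (G2 t) t := by
      intro t ht
      obtain ⟨h1, h2, h3⟩ := ht
      obtain ⟨h3a, h3b⟩ := hX3pos t ⟨h1, h2, h3⟩
      have M1 := ((hasDerivAt_nlog2sin h1 (by linarith)).comp t (hd1 t)).mul_const u1
      have M2 := ((hasDerivAt_nlog2sin h2 (by linarith)).comp t (hd2 t)).mul_const u2
      have M3 := ((hasDerivAt_nlog2sin h3a h3b).comp t (hd3 t)).mul_const (-u1 - u2)
      exact (M1.add M2).add M3
    have hG2neg : ∀ t ∈ U, G2 t < 0 := by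
      intro t ht
      obtain ⟨h1, h2, h3⟩ := ht
      obtain ⟨h3a, h3b⟩ := hX3pos t ⟨h1, h2, h3⟩
      have hsum : X1 t + X2 t + X3 t = π := by simp only [hX3]; ring
      have := key_pos h1 (by linarith) h2 (by linarith) h3a h3b hsum hune
      simp only [hG2]
      nlinarith
    have hsc : StrictConcaveOn ℝ (Set.Icc (0:ℝ) 1) g := by
      apply strictConcaveOn_of_deriv2_neg (convex_Icc 0 1)
      · intro t ht
        exact ((hgd t (hmem t ht)).continuousAt).continuousWithinAt
      · intro t ht
        rw [interior_Icc] at ht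
        have htU : t ∈ U := hmem t (Set.Ioo_subset_Icc_self ht)
        have hev : deriv g =ᶠ[nhds t] G := by
          filter_upwards [hUopen.mem_nhds htU] with s hs
          exact (hgd s hs).deriv
        have : deriv (deriv g) t = G2 t := by
          rw [hev.deriv_eq]
          exact (hGd t htU).deriv
        simpa [Function.iterate_succ, Function.comp, this] using hG2neg t htU
    have h0m : (0:ℝ) ∈ Set.Icc (0:ℝ) 1 := by norm_num
    have h1m : (1:ℝ) ∈ Set.Icc (0:ℝ) 1 := by norm_num
    have hkey := hsc.2 h0m h1m (by norm_num) ha hb hab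
    have e0 : g 0 = lobachevsky x.1 + lobachevsky x.2 + lobachevsky (π - x.1 - x.2) := by
      simp only [hg, hX1, hX2, hX3]
      norm_num
    have e1 : g 1 = lobachevsky y.1 + lobachevsky y.2 + lobachevsky (π - y.1 - y.2) := by
      simp only [hg, hX1, hX2, hX3, hu1, hu2]
      norm_num
    have ecomb : a • (0:ℝ) + b • 1 = b := by simp
    have eb1 : X1 b = (a • x + b • y).1 := by
      simp only [hX1, hu1, Prod.fst_add, Prod.smul_fst, smul_eq_mul]
      have hae : a = 1 - b := by linarith
      rw [hae]; ring
    have eb2 : X2 b = (a • x + b • y).2 := by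
      simp only [hX2, hu2, Prod.snd_add, Prod.smul_snd, smul_eq_mul]
      have hae : a = 1 - b := by linarith
      rw [hae]; ring
    have eb3 : X3 b = π - (a • x + b • y).1 - (a • x + b • y).2 := by
      rw [eX3 b, eb1, eb2]
    have eb : g b = lobachevsky (a • x + b • y).1 + lobachevsky (a • x + b • y).2
        + lobachevsky (π - (a • x + b • y).1 - (a • x + b • y).2) := by
      simp only [hg]
      rw [eb1, eb2, eb3]
    rw [ecomb, e0, e1, eb] at hkey
    simpa using hkey
end
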